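/- Let R → S be a homomorphism of commutative rings making S a finite free R-module, and let B be a commutative S-algebra. Then there exist a commutative R-algebra C and an S-algebra homomorphism u : B → S ⊗_R C with the following universal property: for every commutative R-algebra A and every S-algebra homomorphism φ : B → S ⊗_R A there is a unique R-algebra homomorphism f : C → A such that (id_S ⊗ f) ∘ u = φ. In other words, the functor A ↦ Hom_{S-alg}(B, S ⊗_R A) on commutative R-algebras is corepresentable. -/

import Mathlib

open scoped TensorProduct

universe u

/-- The data of a Weil restriction of the affine object corresponding to the
`S`-algebra `B` along `R → S`: an `R`-algebra `C` together with an `S`-algebra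
homomorphism `u : B → S ⊗_R C` through which every `S`-algebra homomorphism
`B → S ⊗_R A` factors uniquely. -/
structure AffineWeilRestriction (R S B : Type u) [CommRing R] [CommRing S]
    [Algebra R S] [CommRing B] [Algebra S B] : Type (u + 1) where
  C : Type u
  [instCommRing : CommRing C]
  [instAlgebra : Algebra R C]
  u : B →ₐ[S] S ⊗[R] C
  universal : ∀ (A : Type u) [CommRing A] [Algebra R A]
    (φ : B →ₐ[S] S ⊗[R] A),
    ∃! f : C →ₐ[R] A, (Algebra.TensorProduct.map (AlgHom.id S S) f).comp u = φ

namespace WeilAux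

variable {R S : Type u} [CommRing R] [CommRing S] [Algebra R S]
variable {ι : Type u} [Fintype ι]

noncomputable def κ {A : Type u} [CommRing A] [Algebra R A] (e : Module.Basis ι R S) (i : ι) :
    S ⊗[R] A →ₗ[R] A :=
  TensorProduct.lift ((LinearMap.lsmul R A).comp (e.coord i))

set_option linter.unusedSectionVars false

@[simp] lemma κ_tmul {A : Type u} [CommRing A] [Algebra R A] (e : Module.Basis ι R S) (i : ι)
    (s : S) (a : A) : κ e i (s ⊗ₜ[R] a) = e.coord i s • a := rfl

lemma κ_sum {A : Type u} [CommRing A] [Algebra R A] (e : Module.Basis ι R S) (a : ι → A) (i : ι) :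
    κ e i (∑ j, e j ⊗ₜ[R] a j) = a i := by
  classical
  rw [map_sum]
  have : ∀ j, κ e i (e j ⊗ₜ[R] a j) = if j = i then a j else 0 := by
    intro j
    rw [κ_tmul, Module.Basis.coord_apply, Module.Basis.repr_self_apply]
    split <;> simp [*]
  simp_rw [this]
  simp

lemma expand {A : Type u} [CommRing A] [Algebra R A] (e : Module.Basis ι R S) (x : S ⊗[R] A) :
    ∑ i, e i ⊗ₜ[R] κ e i x = x := by
  induction x using TensorProduct.induction_on with
  | zero => simp
  | tmul s a =>
    simp only [κ_tmul, Module.Basis.coord_apply]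
    have : ∀ i, (e i) ⊗ₜ[R] (e.repr s i • a) = (e.repr s i • e i) ⊗ₜ[R] a := by
      intro i; rw [TensorProduct.smul_tmul]
    simp_rw [this, ← TensorProduct.sum_tmul, Module.Basis.sum_repr]
  | add x y hx hy =>
    simp only [map_add, TensorProduct.tmul_add, Finset.sum_add_distrib, hx, hy]

lemma κ_map {A A' : Type u} [CommRing A] [Algebra R A] [CommRing A'] [Algebra R A']
    (e : Module.Basis ι R S) (g : A →ₐ[R] A') (i : ι) (x : S ⊗[R] A) :
    κ e i ((Algebra.TensorProduct.map (AlgHom.id S S) g) x) = g (κ e i x) := by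
  conv_lhs => rw [← expand e x]
  rw [map_sum]
  simp_rw [Algebra.TensorProduct.map_tmul, AlgHom.id_apply]
  rw [κ_sum]

section Construction

variable (B : Type u) [CommRing B] [Algebra S B] (e : Module.Basis ι R S)

/-- The tautological "coordinates" map into the polynomial ring. -/
noncomputable def v (b : B) : S ⊗[R] MvPolynomial (B × ι) R :=
  ∑ i, e i ⊗ₜ[R] MvPolynomial.X (b, i)

/-- The ideal of coefficients of the relations. -/
noncomputable def relIdeal : Ideal (MvPolynomial (B × ι) R) :=
  Ideal.span
    ({x | ∃ b b' i, x = κ e i (v B e (b + b') - v B e b - v B e b')} ∪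
     {x | ∃ b b' i, x = κ e i (v B e (b * b') - v B e b * v B e b')} ∪
     {x | ∃ s i, x = κ e i (v B e (algebraMap S B s)
        - algebraMap S (S ⊗[R] MvPolynomial (B × ι) R) s)})

noncomputable def π : MvPolynomial (B × ι) R →ₐ[R] (MvPolynomial (B × ι) R ⧸ relIdeal B e) :=
  Ideal.Quotient.mkₐ R (relIdeal B e)

noncomputable def M : S ⊗[R] MvPolynomial (B × ι) R →ₐ[S]
    S ⊗[R] (MvPolynomial (B × ι) R ⧸ relIdeal B e) :=
  Algebra.TensorProduct.map (AlgHom.id S S) (π B e)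

lemma M_vanish (d : S ⊗[R] MvPolynomial (B × ι) R)
    (h : ∀ i, κ e i d ∈ relIdeal B e) : M B e d = 0 := by
  conv_lhs => rw [← expand e d]
  rw [map_sum]
  have : ∀ i, (M B e) (e i ⊗ₜ[R] κ e i d) = 0 := by
    intro i
    rw [M, Algebra.TensorProduct.map_tmul]
    have : (π B e) (κ e i d) = 0 := by
      rw [π, Ideal.Quotient.mkₐ_eq_mk, Ideal.Quotient.eq_zero_iff_mem]
      exact h i
    rw [this, TensorProduct.tmul_zero]
  simp [this]

lemma M_v_add (b b' : B) : M B e (v B e (b + b')) = M B e (v B e b) + M B e (v B e b') := by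
  have h := M_vanish B e (v B e (b + b') - v B e b - v B e b') (by
    intro i
    refine Ideal.subset_span (Or.inl (Or.inl ?_))
    exact ⟨b, b', i, rfl⟩)
  rw [map_sub, map_sub, sub_sub, sub_eq_zero] at h
  rw [h]

lemma M_v_mul (b b' : B) : M B e (v B e (b * b')) = M B e (v B e b) * M B e (v B e b') := by
  have h := M_vanish B e (v B e (b * b') - v B e b * v B e b') (by
    intro i
    refine Ideal.subset_span (Or.inl (Or.inr ?_))
    exact ⟨b, b', i, rfl⟩)
  rw [map_sub, sub_eq_zero, map_mul] at h
  rw [h]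

lemma M_v_algebraMap (s : S) :
    M B e (v B e (algebraMap S B s))
      = @algebraMap S (S ⊗[R] (MvPolynomial (B × ι) R ⧸ relIdeal B e)) _ Algebra.TensorProduct.instSemiring _ s := by
  have h := M_vanish B e
    (v B e (algebraMap S B s) - algebraMap S (S ⊗[R] MvPolynomial (B × ι) R) s) (by
    intro i
    refine Ideal.subset_span (Or.inr ?_)
    exact ⟨s, i, rfl⟩)
  rw [map_sub, sub_eq_zero, AlgHom.commutes] at h
  rw [h]

/-- The universal homomorphism. -/
noncomputable def uHom : B →ₐ[S] S ⊗[R] (MvPolynomial (B × ι) R ⧸ relIdeal B e) where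
  toFun b := M B e (v B e b)
  map_one' := by
    show M B e (v B e (1 : B)) = 1
    rw [← (algebraMap S B).map_one, M_v_algebraMap, map_one]
  map_mul' := M_v_mul B e
  map_zero' := by
    have h := M_v_add B e 0 0
    rw [add_zero] at h
    exact (left_eq_add.mp h)
  map_add' := M_v_add B e
  commutes' := M_v_algebraMap B e

lemma uHom_apply (b : B) : uHom B e b = ∑ i, e i ⊗ₜ[R] (π B e (MvPolynomial.X (b, i))) := by
  show M B e (v B e b) = _
  rw [v, M, map_sum]
  simp_rw [Algebra.TensorProduct.map_tmul, AlgHom.id_apply]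

lemma κ_uHom (b : B) (i : ι) : κ e i (uHom B e b) = π B e (MvPolynomial.X (b, i)) := by
  rw [uHom_apply, κ_sum]

theorem universal (A : Type u) [CommRing A] [Algebra R A] (φ : B →ₐ[S] S ⊗[R] A) :
    ∃! f : (MvPolynomial (B × ι) R ⧸ relIdeal B e) →ₐ[R] A,
      (Algebra.TensorProduct.map (AlgHom.id S S) f).comp (uHom B e) = φ := by
  classical
  set g : MvPolynomial (B × ι) R →ₐ[R] A :=
    MvPolynomial.aeval (fun p : B × ι => κ e p.2 (φ p.1)) with hg
  have hgv : ∀ b : B, (Algebra.TensorProduct.map (AlgHom.id S S) g) (v B e b) = φ b := by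
    intro b
    rw [v, map_sum]
    simp_rw [Algebra.TensorProduct.map_tmul, AlgHom.id_apply, hg, MvPolynomial.aeval_X]
    exact expand e (φ b)
  have hker : relIdeal B e ≤ RingHom.ker g.toRingHom := by
    rw [relIdeal, Ideal.span_le]
    rintro x ((⟨b, b', i, rfl⟩ | ⟨b, b', i, rfl⟩) | ⟨s, i, rfl⟩) <;>
      simp only [SetLike.mem_coe, RingHom.mem_ker, AlgHom.toRingHom_eq_coe,
        RingHom.coe_coe] <;>
      rw [← κ_map e g] <;>
      simp only [map_sub, map_mul, hgv, AlgHom.commutes]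
    · rw [map_add] at *
      simp [hgv]
    · simp [hgv]
    · simp
  have hker' : ∀ x ∈ relIdeal B e, g x = 0 := fun x hx => hker hx
  set f : (MvPolynomial (B × ι) R ⧸ relIdeal B e) →ₐ[R] A :=
    Ideal.Quotient.liftₐ (relIdeal B e) g hker' with hf
  have hfπ : ∀ x, f (π B e x) = g x := by
    intro x
    rw [π, Ideal.Quotient.mkₐ_eq_mk, hf]
    exact Ideal.Quotient.liftₐ_apply (relIdeal B e) g hker' _
  refine ⟨f, ?_, ?_⟩
  · ext b
    rw [AlgHom.comp_apply, uHom_apply, map_sum]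
    simp_rw [Algebra.TensorProduct.map_tmul, AlgHom.id_apply, hfπ, hg, MvPolynomial.aeval_X]
    exact expand e (φ b)
  · intro f' hf'
    have key : ∀ (b : B) (i : ι),
        f' (π B e (MvPolynomial.X (b, i))) = g (MvPolynomial.X (b, i)) := by
      intro b i
      rw [← κ_uHom B e b i, ← κ_map e f' i (uHom B e b)]
      have : (Algebra.TensorProduct.map (AlgHom.id S S) f') (uHom B e b) = φ b :=
        DFunLike.congr_fun hf' b
      rw [this, hg]
      simp [MvPolynomial.aeval_X]
    apply Ideal.Quotient.algHom_ext
    apply MvPolynomial.algHom_ext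
    intro p
    obtain ⟨b, i⟩ := p
    show f' (π B e (MvPolynomial.X (b, i))) = f (π B e (MvPolynomial.X (b, i)))
    rw [key, hfπ]

end Construction

end WeilAux

/-- Along a finite free ring map `R → S`, the functor
`A ↦ Hom_{S-alg}(B, S ⊗_R A)` is corepresentable by an `R`-algebra `C`. -/
theorem affine_weil_restriction_exists (R S B : Type u) [CommRing R]
    [CommRing S] [Algebra R S] [Module.Free R S] [Module.Finite R S]
    [CommRing B] [Algebra S B] :
    Nonempty (AffineWeilRestriction R S B) := by
  classical
  let e := Module.Free.chooseBasis R S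
  exact ⟨⟨_, WeilAux.uHom B e, fun A _ _ φ => WeilAux.universal B e A φ⟩⟩
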